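/- Let G be a modular noetherian right ℓ-group containing the strong order unit s with s^{-1} = ⋀ X(G⁻), the meet of all dual atoms of G⁻. Then an element g ∈ G⁻ is meet-irreducible in G⁻ if and only if g is 1-homogeneous, i.e., every factor of its right-normal factorization is a dual atom. -/

import Mathlib

/-- An element `s` of a right ℓ-group is normal if left multiplication by `s` preserves
the lattice operations. -/
def IsNormal {G : Type*} [Lattice G] [Group G] (s : G) : Prop :=
  ∀ x y : G, s * (x ⊓ y) = s * x ⊓ s * y ∧ s * (x ⊔ y) = s * x ⊔ s * y

/-- A strong order unit: a normal element `s > 1` such that every `g` satisfies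
`g ≤ sⁿ` for some integer `n`. -/
def IsStrongOrderUnit {G : Type*} [Lattice G] [Group G] (s : G) : Prop :=
  1 < s ∧ IsNormal s ∧ ∀ g : G, ∃ n : ℤ, g ≤ s ^ n

/-- A right ℓ-group is noetherian if every ascending chain bounded above and every
descending chain bounded below stabilizes. -/
def IsLatticeNoetherian (G : Type*) [Lattice G] : Prop :=
  (∀ f : ℕ → G, Monotone f → (∃ h : G, ∀ n, f n ≤ h) → ∃ N, ∀ m, N ≤ m → f m = f N) ∧
  (∀ f : ℕ → G, Antitone f → (∃ h : G, ∀ n, h ≤ f n) → ∃ N, ∀ m, N ≤ m → f m = f N)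

section MeetIrrAux

set_option linter.unusedSectionVars false

variable {G : Type*} [Lattice G] [Group G]
variable [CovariantClass G G (Function.swap (· * ·)) (· ≤ ·)]

private lemma aux_mul_lt_mul_right {a b : G} (h : a < b) (c : G) : a * c < b * c := by
  rcases lt_iff_le_and_ne.1 h with ⟨hle, hne⟩
  refine lt_of_le_of_ne (mul_le_mul_left hle c) (fun hEq => hne ?_)
  have := congrArg (fun z => z * c⁻¹) hEq
  simpa using this

private lemma aux_covBy_mul_right {a b : G} (h : a ⋖ b) (c : G) : a * c ⋖ b * c := by
  refine ⟨aux_mul_lt_mul_right h.1 c, ?_⟩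
  intro z h1 h2
  have h1' : a < z * c⁻¹ := by
    have := aux_mul_lt_mul_right h1 c⁻¹; simpa using this
  have h2' : z * c⁻¹ < b := by
    have := aux_mul_lt_mul_right h2 c⁻¹; simpa using this
  exact h.2 h1' h2'

private lemma aux_mul_inf (a b c : G) : (a ⊓ b) * c = a * c ⊓ b * c := by
  apply le_antisymm
  · exact le_inf (mul_le_mul_left inf_le_left c) (mul_le_mul_left inf_le_right c)
  · have h1 : (a * c ⊓ b * c) * c⁻¹ ≤ a := by
      have := mul_le_mul_left (inf_le_left : a * c ⊓ b * c ≤ a * c) c⁻¹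
      simpa using this
    have h2 : (a * c ⊓ b * c) * c⁻¹ ≤ b := by
      have := mul_le_mul_left (inf_le_right : a * c ⊓ b * c ≤ b * c) c⁻¹
      simpa using this
    have := mul_le_mul_left (le_inf h1 h2) c
    simpa using this

private lemma aux_isNormal_one : IsNormal (1 : G) := by
  intro x y; simp

private lemma aux_isNormal_mul {t u : G} (ht : IsNormal t) (hu : IsNormal u) :
    IsNormal (t * u) := by
  intro x y
  constructor
  · rw [mul_assoc, (hu x y).1, (ht (u * x) (u * y)).1, mul_assoc, mul_assoc]
  · rw [mul_assoc, (hu x y).2, (ht (u * x) (u * y)).2, mul_assoc, mul_assoc]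

private lemma aux_isNormal_inv {t : G} (ht : IsNormal t) : IsNormal t⁻¹ := by
  intro x y
  constructor
  · have h1 := (ht (t⁻¹ * x) (t⁻¹ * y)).1
    simp only [mul_inv_cancel_left] at h1
    calc t⁻¹ * (x ⊓ y) = t⁻¹ * (t * (t⁻¹ * x ⊓ t⁻¹ * y)) := by rw [h1]
    _ = t⁻¹ * x ⊓ t⁻¹ * y := by rw [inv_mul_cancel_left]
  · have h1 := (ht (t⁻¹ * x) (t⁻¹ * y)).2
    simp only [mul_inv_cancel_left] at h1
    calc t⁻¹ * (x ⊔ y) = t⁻¹ * (t * (t⁻¹ * x ⊔ t⁻¹ * y)) := by rw [h1]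
    _ = t⁻¹ * x ⊔ t⁻¹ * y := by rw [inv_mul_cancel_left]

private lemma aux_isNormal_zpow {t : G} (ht : IsNormal t) : ∀ n : ℤ, IsNormal (t ^ n) := by
  have hnat : ∀ n : ℕ, IsNormal (t ^ (n : ℤ)) := by
    intro n
    induction n with
    | zero => simpa using (aux_isNormal_one (G := G))
    | succ m ihm =>
      have e : ((m + 1 : ℕ) : ℤ) = (m : ℤ) + 1 := by push_cast; ring
      rw [e, zpow_add_one]
      exact aux_isNormal_mul ihm ht
  intro n
  rcases Int.eq_nat_or_neg n with ⟨m, rfl | rfl⟩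
  · exact hnat m
  · rw [zpow_neg]; exact aux_isNormal_inv (hnat m)

private lemma aux_normal_mono {t : G} (ht : IsNormal t) {x y : G} (h : x ≤ y) :
    t * x ≤ t * y := by
  have h1 := (ht x y).2
  rw [sup_eq_right.2 h] at h1
  rw [h1]; exact le_sup_left

private lemma aux_exists_maximal (hG : IsLatticeNoetherian G) (S : Set G) (x0 : G)
    (hx0 : x0 ∈ S) (u : G) (hb : ∀ z ∈ S, z ≤ u) : ∃ m ∈ S, ∀ z ∈ S, ¬ m < z := by
  classical
  by_contra hcon
  push_neg at hcon
  choose F hF1 hF2 using hcon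
  let f : ℕ → {z : G // z ∈ S} := fun n =>
    Nat.rec (⟨x0, hx0⟩ : {z : G // z ∈ S}) (fun _ p => ⟨F p.1 p.2, hF1 p.1 p.2⟩) n
  have hstep : ∀ n, (f n).1 < (f (n + 1)).1 := fun n => hF2 (f n).1 (f n).2
  have hmono : Monotone (fun n => (f n).1) := monotone_nat_of_le_succ fun n => (hstep n).le
  obtain ⟨N, hN⟩ := hG.1 (fun n => (f n).1) hmono ⟨u, fun n => hb _ (f n).2⟩
  exact absurd (hN (N + 1) (Nat.le_succ N)) (ne_of_gt (hstep N))

private lemma aux_exists_minimal (hG : IsLatticeNoetherian G) (S : Set G) (x0 : G)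
    (hx0 : x0 ∈ S) (l : G) (hb : ∀ z ∈ S, l ≤ z) : ∃ m ∈ S, ∀ z ∈ S, ¬ z < m := by
  classical
  by_contra hcon
  push_neg at hcon
  choose F hF1 hF2 using hcon
  let f : ℕ → {z : G // z ∈ S} := fun n =>
    Nat.rec (⟨x0, hx0⟩ : {z : G // z ∈ S}) (fun _ p => ⟨F p.1 p.2, hF1 p.1 p.2⟩) n
  have hstep : ∀ n, (f (n + 1)).1 < (f n).1 := fun n => hF2 (f n).1 (f n).2
  have hmono : Antitone (fun n => (f n).1) := antitone_nat_of_succ_le fun n => (hstep n).le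
  obtain ⟨N, hN⟩ := hG.2 (fun n => (f n).1) hmono ⟨l, fun n => hb _ (f n).2⟩
  exact absurd (hN (N + 1) (Nat.le_succ N)) (ne_of_lt (hstep N))

private lemma aux_exists_covBy_above (hG : IsLatticeNoetherian G) {a b : G}
    (hab : a ≤ b) (hne : a ≠ b) : ∃ c, a ⋖ c ∧ c ≤ b := by
  obtain ⟨m, hm, hmin⟩ := aux_exists_minimal hG {z | a < z ∧ z ≤ b} b
    ⟨lt_of_le_of_ne hab hne, le_rfl⟩ a (fun z hz => hz.1.le)
  refine ⟨m, ⟨hm.1, ?_⟩, hm.2⟩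
  intro z h1 h2
  exact hmin z ⟨h1, h2.le.trans hm.2⟩ h2

private lemma aux_exists_covBy_below (hG : IsLatticeNoetherian G) {a b : G}
    (hab : a ≤ b) (hne : a ≠ b) : ∃ c, a ≤ c ∧ c ⋖ b := by
  obtain ⟨m, hm, hmax⟩ := aux_exists_maximal hG {z | a ≤ z ∧ z < b} a
    ⟨le_rfl, lt_of_le_of_ne hab hne⟩ b (fun z hz => hz.2.le)
  refine ⟨m, hm.1, hm.2, ?_⟩
  intro z h1 h2
  exact hmax z ⟨hm.1.trans h1.le, h2⟩ h1

private lemma aux_supcov [IsModularLattice G] {x y : G} (c : G) (hxy : x ⋖ y)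
    (h1 : y ⊓ c ≤ x) : (x ⊔ c) ⋖ (y ⊔ c) := by
  have hxyle : x ≤ y := hxy.1.le
  have hmeet : (x ⊔ c) ⊓ y = x := by
    rw [sup_inf_assoc_of_le c hxyle]
    exact sup_eq_left.2 (le_trans (le_of_eq (inf_comm c y)) h1)
  constructor
  · refine lt_of_le_of_ne (sup_le_sup_right hxyle c) (fun hEq => ?_)
    have : x = y := by
      rw [← hmeet, hEq, inf_eq_right.2 le_sup_left]
    exact hxy.1.ne this
  · intro z h1z h2z
    have hcz : c ≤ z := le_trans le_sup_right h1z.le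
    have hzeq : z = c ⊔ (y ⊓ z) := by
      have h := sup_inf_assoc_of_le y hcz
      rw [inf_eq_right.2 (le_of_le_of_eq h2z.le (sup_comm y c))] at h
      exact h
    have hxz : x ≤ y ⊓ z := le_inf hxyle (le_sup_left.trans h1z.le)
    rcases lt_or_eq_of_le hxz with hlt | heq
    · rcases lt_or_eq_of_le (inf_le_left : y ⊓ z ≤ y) with hlt2 | heq2
      · exact hxy.2 hlt hlt2
      · have hyz : y ≤ z := heq2 ▸ inf_le_right
        exact h2z.not_ge (sup_le hyz hcz)
    · have : z = x ⊔ c := by rw [hzeq, ← heq, sup_comm]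
      exact absurd this (ne_of_gt h1z)

variable (s : G)

private lemma aux_zpow_neg_le_one (hs1 : 1 < s) : ∀ n : ℕ, s ^ (-(n : ℤ)) ≤ 1 := by
  have hsi : s⁻¹ ≤ (1 : G) := by
    have := mul_le_mul_left hs1.le s⁻¹; simpa using this
  intro n
  induction n with
  | zero => simp
  | succ m ihm =>
    have e : s ^ (-((m + 1 : ℕ) : ℤ)) = s ^ (-(m : ℤ)) * s⁻¹ := by
      rw [show -((m + 1 : ℕ) : ℤ) = -(m : ℤ) + (-1) by push_cast; ring, zpow_add, zpow_neg_one]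
    rw [e]
    calc s ^ (-(m : ℤ)) * s⁻¹ ≤ 1 * s⁻¹ := mul_le_mul_left ihm s⁻¹
    _ = s⁻¹ := one_mul _
    _ ≤ 1 := hsi

private lemma aux_stab_step (hns : IsNormal s) (hs1 : 1 < s) (x : G) (c : ℤ)
    (hEq : x ⊔ s ^ c = x ⊔ s ^ (c + 1)) : x ⊔ s ^ (c - 1) = x ⊔ s ^ c := by
  have hnsi := aux_isNormal_inv hns
  have hsi : s⁻¹ ≤ (1 : G) := by
    have := mul_le_mul_left hs1.le s⁻¹; simpa using this
  have habs : x ⊔ s⁻¹ * x = x := sup_eq_left.2 (by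
    have := mul_le_mul_left hsi x; simpa using this)
  have key : ∀ d : ℤ, x ⊔ s⁻¹ * (x ⊔ s ^ d) = x ⊔ s ^ (d - 1) := by
    intro d
    rw [(hnsi x (s ^ d)).2, ← sup_assoc, habs]
    congr 1
    rw [show d - 1 = (-1) + d by ring, zpow_add, zpow_neg_one]
  have h2 : x ⊔ s⁻¹ * (x ⊔ s ^ c) = x ⊔ s⁻¹ * (x ⊔ s ^ (c + 1)) := by rw [hEq]
  rw [key c, key (c + 1)] at h2
  simpa using h2

private lemma aux_stab (hns : IsNormal s) (hs1 : 1 < s) (x : G) (a : ℤ)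
    (hEq : x ⊔ s ^ (a - 1) = x ⊔ s ^ a) :
    ∀ j : ℕ, x ⊔ s ^ (a - 1 - (j : ℤ)) = x ⊔ s ^ a := by
  have hcons : ∀ j : ℕ, x ⊔ s ^ (a - 1 - (j : ℤ)) = x ⊔ s ^ (a - (j : ℤ)) := by
    intro j
    induction j with
    | zero => simpa using hEq
    | succ m ihm =>
      have hstep := aux_stab_step s hns hs1 x (a - 1 - (m : ℤ))
        (by rw [show a - 1 - (m : ℤ) + 1 = a - (m : ℤ) by ring]; exact ihm)
      rw [show a - 1 - ((m + 1 : ℕ) : ℤ) = a - 1 - (m : ℤ) - 1 by push_cast; ring,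
          show a - ((m + 1 : ℕ) : ℤ) = a - 1 - (m : ℤ) by push_cast; ring]
      exact hstep
  intro j
  induction j with
  | zero => simpa using hEq
  | succ m ihm =>
    calc x ⊔ s ^ (a - 1 - ((m + 1 : ℕ) : ℤ)) = x ⊔ s ^ (a - ((m + 1 : ℕ) : ℤ)) := hcons (m + 1)
    _ = x ⊔ s ^ (a - 1 - (m : ℤ)) := by
        rw [show a - ((m + 1 : ℕ) : ℤ) = a - 1 - (m : ℤ) by push_cast; ring]
    _ = x ⊔ s ^ a := ihm

private lemma aux_deg_one (deg : G → ℤ) (hdeg : ∀ a b : G, deg (a * b) = deg a + deg b) :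
    deg (1 : G) = 0 := by
  have := hdeg 1 1; simp at this; omega

private lemma aux_deg_inv (deg : G → ℤ) (hdeg : ∀ a b : G, deg (a * b) = deg a + deg b)
    (x : G) : deg x⁻¹ = -deg x := by
  have h := hdeg x x⁻¹
  simp only [mul_inv_cancel] at h
  have h0 := aux_deg_one deg hdeg
  omega

private lemma aux_deg_covBy (deg : G → ℤ) (hdeg : ∀ a b : G, deg (a * b) = deg a + deg b)
    (hatom : ∀ x : G, x ⋖ 1 → deg x = 1) {a b : G} (h : a ⋖ b) : deg a = deg b + 1 := by
  have h1 : a * b⁻¹ ⋖ 1 := by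
    have := aux_covBy_mul_right h b⁻¹; simpa using this
  have h2 := hatom _ h1
  rw [hdeg, aux_deg_inv deg hdeg] at h2
  omega

private lemma aux_cover_s_fact (hglb : IsGLB {x : G | x ⋖ 1} s⁻¹) {a b : G} (h : a ⋖ b) :
    s⁻¹ * b ≤ a := by
  have h1 : a * b⁻¹ ⋖ 1 := by
    have := aux_covBy_mul_right h b⁻¹; simpa using this
  have h2 : s⁻¹ ≤ a * b⁻¹ := hglb.1 h1
  have := mul_le_mul_left h2 b
  simpa using this

private lemma aux_chain (deg : G → ℤ) (hdeg : ∀ a b : G, deg (a * b) = deg a + deg b)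
    (hatom : ∀ x : G, x ⋖ 1 → deg x = 1) (hG : IsLatticeNoetherian G)
    (b a : G) (hab : a ≤ b) :
    deg b ≤ deg a ∧ (deg a = deg b → a = b) ∧ (deg a = deg b + 1 → a ⋖ b) := by
  by_contra hbad
  obtain ⟨m, hm, hmax⟩ := aux_exists_maximal hG
    {z | z ≤ b ∧ ¬(deg b ≤ deg z ∧ (deg z = deg b → z = b) ∧ (deg z = deg b + 1 → z ⋖ b))}
    a ⟨hab, hbad⟩ b (fun z hz => hz.1)
  rcases eq_or_lt_of_le hm.1 with heq | hlt
  · refine hm.2 ⟨le_of_eq (congrArg deg heq.symm), fun _ => heq, fun habs => ?_⟩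
    rw [heq] at habs
    exact absurd habs (by linarith)
  · obtain ⟨y, hcov, hyb⟩ := aux_exists_covBy_above hG hm.1 hlt.ne
    have hygood : deg b ≤ deg y ∧ (deg y = deg b → y = b) ∧ (deg y = deg b + 1 → y ⋖ b) := by
      by_contra hybad
      exact hmax y ⟨hyb, hybad⟩ hcov.1
    have hdm : deg m = deg y + 1 := aux_deg_covBy deg hdeg hatom hcov
    refine hm.2 ⟨by linarith [hygood.1], fun h => absurd h (by linarith [hygood.1]),
      fun h => ?_⟩
    have hyb' : deg y = deg b := by omega
    rw [hygood.2.1 hyb'] at hcov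
    exact hcov

private lemma aux_F3 (hglb : IsGLB {x : G | x ⋖ 1} s⁻¹) (deg : G → ℤ)
    (hdeg : ∀ a b : G, deg (a * b) = deg a + deg b)
    (hatom : ∀ x : G, x ⋖ 1 → deg x = 1) (hG : IsLatticeNoetherian G)
    (hns : IsNormal s) : ∀ x : G, x ≤ 1 → s ^ (-(deg x)) ≤ x := by
  have hnsi := aux_isNormal_inv hns
  intro x hx
  by_contra hbad
  obtain ⟨m, hm, hmax⟩ := aux_exists_maximal hG
    {z | z ≤ 1 ∧ ¬ s ^ (-(deg z)) ≤ z} x ⟨hx, hbad⟩ 1 (fun z hz => hz.1)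
  have hm1 : m ≠ 1 := by
    intro h
    apply hm.2
    rw [h, aux_deg_one deg hdeg]
    simp
  obtain ⟨y, hcov, hy1⟩ := aux_exists_covBy_above hG hm.1 hm1
  have hygood : s ^ (-(deg y)) ≤ y := by
    by_contra hybad
    exact hmax y ⟨hy1, hybad⟩ hcov.1
  have hdm : deg m = deg y + 1 := aux_deg_covBy deg hdeg hatom hcov
  apply hm.2
  have h1 : s ^ (-(deg m)) = s⁻¹ * s ^ (-(deg y)) := by
    rw [hdm, show -(deg y + 1) = (-1) + (-(deg y)) by ring, zpow_add, zpow_neg_one]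
  rw [h1]
  calc s⁻¹ * s ^ (-(deg y)) ≤ s⁻¹ * y := aux_normal_mono hnsi hygood
  _ ≤ m := aux_cover_s_fact s hglb hcov

/-- The key geometric step: if `g < 1` is meet-irreducible in the cone, then
`g ⊔ s⁻¹` is a coatom. -/
private lemma aux_thin [IsModularLattice G] (hglb : IsGLB {x : G | x ⋖ 1} s⁻¹)
    (deg : G → ℤ) (hdeg : ∀ a b : G, deg (a * b) = deg a + deg b)
    (hatom : ∀ x : G, x ⋖ 1 → deg x = 1) (hG : IsLatticeNoetherian G)
    (hs1 : 1 < s) (hns : IsNormal s)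
    {g : G} (hg1 : g ≤ 1) (hglt : g < 1) (hne1 : g ⊔ s⁻¹ ≠ 1)
    (hirr : ∀ a b : G, a ≤ 1 → b ≤ 1 → g = a ⊓ b → g = a ∨ g = b) :
    (g ⊔ s⁻¹) ⋖ 1 := by
  classical
  have hnsi : IsNormal s⁻¹ := aux_isNormal_inv hns
  have hsinv1 : s⁻¹ ≤ (1 : G) := by
    have := mul_le_mul_left hs1.le s⁻¹; simpa using this
  -- unique cover c₀ of g, below everything strictly above g in the cone
  obtain ⟨c₀, hc₀, hc₀1⟩ := aux_exists_covBy_above hG hg1 hglt.ne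
  have hc₀min : ∀ z : G, g < z → z ≤ 1 → c₀ ≤ z := by
    intro z hz hz1
    obtain ⟨c, hc, hcz⟩ := aux_exists_covBy_above hG hz.le hz.ne
    by_cases hcc : c = c₀
    · exact hcc ▸ hcz
    · exfalso
      have hinf : c ⊓ c₀ = g := by
        rcases eq_or_lt_of_le (le_inf hc.1.le hc₀.1.le : g ≤ c ⊓ c₀) with heq | hlt
        · exact heq.symm
        · exfalso
          rcases lt_or_eq_of_le (inf_le_left : c ⊓ c₀ ≤ c) with hlt2 | heq2
          · exact hc.2 hlt hlt2
          · have : c < c₀ := lt_of_le_of_ne (heq2 ▸ inf_le_right) hcc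
            exact hc₀.2 hc.1 this
      rcases hirr c c₀ (hcz.trans hz1) hc₀1 hinf.symm with h | h
      · exact hc.1.ne h
      · exact hc₀.1.ne h
  -- a "thin" coatom exists
  obtain ⟨f, hf, hfeq⟩ : ∃ f : G, f ⋖ 1 ∧ s * (f * g) ⊓ 1 = g := by
    by_contra hth
    push_neg at hth
    have hlow : ∀ f : G, f ⋖ 1 → s⁻¹ * c₀ ≤ f * g := by
      intro f hf
      have h1 : s⁻¹ * g ≤ f * g := mul_le_mul_left (hglb.1 hf) g
      have h2 : g ≤ s * (f * g) := by
        have := aux_normal_mono hns h1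
        rw [mul_inv_cancel_left] at this
        exact this
      have h3 : g < s * (f * g) ⊓ 1 := lt_of_le_of_ne (le_inf h2 hg1) (Ne.symm (hth f hf))
      have h5 : c₀ ≤ s * (f * g) := (hc₀min _ h3 inf_le_right).trans inf_le_left
      have := aux_normal_mono hnsi h5
      rw [inv_mul_cancel_left] at this
      exact this
    have hlb : (s⁻¹ * c₀) * g⁻¹ ∈ lowerBounds {x : G | x ⋖ 1} := by
      intro f hf
      have := mul_le_mul_left (hlow f hf) g⁻¹
      simpa [mul_inv_cancel_right] using this
    have h6 := hglb.2 hlb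
    have h7 : s⁻¹ * c₀ ≤ s⁻¹ * g := by
      have := mul_le_mul_left h6 g; simpa [inv_mul_cancel_right] using this
    have h8 : c₀ ≤ g := by
      have := aux_normal_mono hns h7
      rw [mul_inv_cancel_left, mul_inv_cancel_left] at this
      exact this
    exact hc₀.1.not_ge h8
  -- key pinned meet
  have hkey : (f * g) ⊓ s⁻¹ = s⁻¹ * g := by
    have h1 := congrArg (fun z => s⁻¹ * z) hfeq
    rw [(hnsi (s * (f * g)) 1).1, inv_mul_cancel_left, mul_one] at h1
    exact h1
  set v := f * g with hvdef
  set m0 := s⁻¹ * g with hm0def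
  have hm0v : m0 ≤ v := mul_le_mul_left (hglb.1 hf) g
  have hm0s : m0 ≤ s⁻¹ := by
    have := aux_normal_mono hnsi hg1
    rw [mul_one] at this
    exact this
  have hvg : v ≤ g := by
    have := mul_le_mul_left hf.1.le g
    rw [one_mul] at this
    exact this
  -- interval induction: deg (x ⊔ s⁻¹) = deg x - deg g on [m0, v]
  have hP : ∀ x : G, m0 ≤ x → x ≤ v → deg (x ⊔ s⁻¹) = deg x - deg g := by
    intro x hx1 hx2
    by_contra hxbad
    obtain ⟨x', hx', hmin⟩ := aux_exists_minimal hG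
      {z | m0 ≤ z ∧ z ≤ v ∧ ¬ deg (z ⊔ s⁻¹) = deg z - deg g} x ⟨hx1, hx2, hxbad⟩
      m0 (fun z hz => hz.1)
    have hPm0 : deg (m0 ⊔ s⁻¹) = deg m0 - deg g := by
      rw [sup_eq_right.2 hm0s, hm0def, hdeg]
      ring
    have hxm0 : m0 ≠ x' := by
      intro h
      exact hx'.2.2 (h ▸ hPm0)
    obtain ⟨y, hym0, hycov⟩ := aux_exists_covBy_below hG hx'.1 hxm0
    have hyv : y ≤ v := hycov.1.le.trans hx'.2.1
    have hPy : deg (y ⊔ s⁻¹) = deg y - deg g := by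
      by_contra hybad
      exact hmin y ⟨hym0, hyv, hybad⟩ hycov.1
    have hpin : x' ⊓ s⁻¹ = m0 := by
      apply le_antisymm
      · calc x' ⊓ s⁻¹ ≤ v ⊓ s⁻¹ := inf_le_inf_right s⁻¹ hx'.2.1
        _ = m0 := hkey
      · exact le_inf hx'.1 (hm0s)
    have hsc : (y ⊔ s⁻¹) ⋖ (x' ⊔ s⁻¹) :=
      aux_supcov s⁻¹ hycov (by rw [hpin]; exact hym0)
    have hd1 : deg y = deg x' + 1 := aux_deg_covBy deg hdeg hatom hycov
    have hd2 : deg (y ⊔ s⁻¹) = deg (x' ⊔ s⁻¹) + 1 := aux_deg_covBy deg hdeg hatom hsc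
    exact hx'.2.2 (by omega)
  have hPv := hP v hm0v le_rfl
  have hdegV : deg (v ⊔ s⁻¹) = 1 := by
    rw [hPv, hvdef, hdeg, hatom f hf]
    ring
  have hVle : v ⊔ s⁻¹ ≤ g ⊔ s⁻¹ := sup_le_sup_right hvg s⁻¹
  have hg1le : g ⊔ s⁻¹ ≤ 1 := sup_le hg1 hsinv1
  have hVcov : (v ⊔ s⁻¹) ⋖ 1 := by
    refine (aux_chain deg hdeg hatom hG 1 (v ⊔ s⁻¹) (hVle.trans hg1le)).2.2 ?_
    rw [hdegV, aux_deg_one deg hdeg]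
    ring
  rcases eq_or_lt_of_le hVle with heq | hlt
  · rw [← heq]; exact hVcov
  · exact absurd (lt_of_le_of_ne hg1le hne1) (hVcov.2 hlt)

end MeetIrrAux

/-- In a modular noetherian right ℓ-group with `s⁻¹ = ⋀ X(G⁻)` a strong order unit,
`g ≤ 1` is meet-irreducible in the negative cone iff it is 1-homogeneous, i.e. each
right-normal factor `g_i = (g ⊔ s^{-i})(g ⊔ s^{-(i-1)})⁻¹` has degree 1. -/
theorem meet_irreducibles_are_1_homogeneous {G : Type*} [Lattice G] [Group G]
    [CovariantClass G G (Function.swap (· * ·)) (· ≤ ·)] [IsModularLattice G]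
    (hG : IsLatticeNoetherian G) (s : G)
    (hglb : IsGLB {x : G | x ⋖ 1} s⁻¹) (hs : IsStrongOrderUnit s)
    (deg : G → ℤ) (hdeg : ∀ a b : G, deg (a * b) = deg a + deg b)
    (hatom : ∀ x : G, x ⋖ 1 → deg x = 1)
    (g : G) (hg : g ≤ 1)
    (k : ℕ) (hk : s ^ (-(k : ℤ)) ≤ g) (hkmin : ∀ j : ℕ, j < k → ¬ s ^ (-(j : ℤ)) ≤ g) :
    (∀ a b : G, a ≤ 1 → b ≤ 1 → g = a ⊓ b → g = a ∨ g = b) ↔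
      (∀ i : ℕ, 1 ≤ i → i ≤ k →
        deg ((g ⊔ s ^ (-(i : ℤ))) * (g ⊔ s ^ (-(i : ℤ) + 1))⁻¹) = 1) := by
  classical
  obtain ⟨hs1, hns, -⟩ := hs
  have hnsi : IsNormal s⁻¹ := aux_isNormal_inv hns
  have hsinv1 : s⁻¹ ≤ (1 : G) := by
    have := mul_le_mul_left hs1.le s⁻¹; simpa using this
  -- KEY: meet-irreducible elements have degree equal to their index
  have KEY : ∀ (k' : ℕ) (g' : G), g' ≤ 1 → s ^ (-(k' : ℤ)) ≤ g' →
      (∀ j : ℕ, j < k' → ¬ s ^ (-(j : ℤ)) ≤ g') →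
      (∀ a b : G, a ≤ 1 → b ≤ 1 → g' = a ⊓ b → g' = a ∨ g' = b) →
      deg g' = (k' : ℤ) := by
    intro k'
    induction k' with
    | zero =>
      intro g' hg'1 hk' _ _
      have h1 : (1 : G) ≤ g' := by simpa using hk'
      rw [le_antisymm hg'1 h1, aux_deg_one deg hdeg]
      simp
    | succ n ih =>
      intro g' hg'1 hk' hkmin' hirr'
      have hglt : g' < 1 := by
        refine lt_of_le_of_ne hg'1 ?_
        intro h
        exact hkmin' 0 (Nat.succ_pos n) (by simpa using le_of_eq h.symm)
      have hg₁le1 : g' ⊔ s⁻¹ ≤ 1 := sup_le hg'1 hsinv1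
      -- g' ⊔ s⁻¹ ≠ 1 via stabilization
      have hne1 : g' ⊔ s⁻¹ ≠ 1 := by
        intro hq
        have h0 : g' ⊔ s ^ ((0 : ℤ) - 1) = g' ⊔ s ^ (0 : ℤ) := by
          rw [zero_sub, zpow_neg_one, zpow_zero]
          rw [hq, sup_eq_right.2 hg'1]
        have h2 := aux_stab s hns hs1 g' 0 h0 n
        rw [show (0 : ℤ) - 1 - (n : ℤ) = -((n + 1 : ℕ) : ℤ) by push_cast; ring] at h2
        rw [sup_eq_left.2 hk', zpow_zero, sup_eq_right.2 hg'1] at h2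
        exact hglt.ne h2
      -- g' ⊔ s⁻¹ is a coatom
      have hg₁cov : (g' ⊔ s⁻¹) ⋖ 1 :=
        aux_thin s hglb deg hdeg hatom hG hs1 hns hg'1 hglt hne1 hirr'
      -- peel: g'' = g' * (g' ⊔ s⁻¹)⁻¹
      have hg'le : g' ≤ g' ⊔ s⁻¹ := le_sup_left
      have hg''1 : g' * (g' ⊔ s⁻¹)⁻¹ ≤ 1 := by
        have := mul_le_mul_left hg'le (g' ⊔ s⁻¹)⁻¹
        simpa using this
      have hg''k : s ^ (-(n : ℤ)) ≤ g' * (g' ⊔ s⁻¹)⁻¹ := by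
        have hmul : s ^ (-(n : ℤ)) * (g' ⊔ s⁻¹) ≤ g' := by
          rw [(aux_isNormal_zpow hns (-(n : ℤ)) g' s⁻¹).2]
          refine sup_le ?_ ?_
          · have := mul_le_mul_left (aux_zpow_neg_le_one s hs1 n) g'
            simpa using this
          · have e : s ^ (-(n : ℤ)) * s⁻¹ = s ^ (-((n + 1 : ℕ) : ℤ)) := by
              rw [show -((n + 1 : ℕ) : ℤ) = -(n : ℤ) + (-1) by push_cast; ring,
                zpow_add, zpow_neg_one]
            rw [e]
            exact hk'
        have := mul_le_mul_left hmul (g' ⊔ s⁻¹)⁻¹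
        rwa [mul_inv_cancel_right] at this
      have hg''min : ∀ j : ℕ, j < n → ¬ s ^ (-(j : ℤ)) ≤ g' * (g' ⊔ s⁻¹)⁻¹ := by
        intro j hj hle
        have h1 : s ^ (-(j : ℤ)) * (g' ⊔ s⁻¹) ≤ g' := by
          have := mul_le_mul_left hle (g' ⊔ s⁻¹)
          rwa [inv_mul_cancel_right] at this
        have h2 : s ^ (-((j + 1 : ℕ) : ℤ)) ≤ g' := by
          have e : s ^ (-((j + 1 : ℕ) : ℤ)) = s ^ (-(j : ℤ)) * s⁻¹ := by
            rw [show -((j + 1 : ℕ) : ℤ) = -(j : ℤ) + (-1) by push_cast; ring,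
              zpow_add, zpow_neg_one]
          rw [e]
          calc s ^ (-(j : ℤ)) * s⁻¹ ≤ s ^ (-(j : ℤ)) * (g' ⊔ s⁻¹) :=
              aux_normal_mono (aux_isNormal_zpow hns (-(j : ℤ))) le_sup_right
          _ ≤ g' := h1
        exact hkmin' (j + 1) (by omega) h2
      have hg''irr : ∀ a b : G, a ≤ 1 → b ≤ 1 → g' * (g' ⊔ s⁻¹)⁻¹ = a ⊓ b →
          g' * (g' ⊔ s⁻¹)⁻¹ = a ∨ g' * (g' ⊔ s⁻¹)⁻¹ = b := by
        intro a b ha hb heq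
        have hg'eq : g' = (a * (g' ⊔ s⁻¹)) ⊓ (b * (g' ⊔ s⁻¹)) := by
          rw [← aux_mul_inf, ← heq, inv_mul_cancel_right]
        have ha' : a * (g' ⊔ s⁻¹) ≤ 1 :=
          le_trans (by simpa using mul_le_mul_left ha (g' ⊔ s⁻¹)) hg₁le1
        have hb' : b * (g' ⊔ s⁻¹) ≤ 1 :=
          le_trans (by simpa using mul_le_mul_left hb (g' ⊔ s⁻¹)) hg₁le1
        rcases hirr' (a * (g' ⊔ s⁻¹)) (b * (g' ⊔ s⁻¹)) ha' hb' hg'eq with h | h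
        · left; exact mul_inv_eq_iff_eq_mul.2 h
        · right; exact mul_inv_eq_iff_eq_mul.2 h
      have hdg'' := ih (g' * (g' ⊔ s⁻¹)⁻¹) hg''1 hg''k hg''min hg''irr
      have hsplit : deg g' = deg (g' * (g' ⊔ s⁻¹)⁻¹) + deg (g' ⊔ s⁻¹) := by
        rw [hdeg, aux_deg_inv deg hdeg]
        ring
      rw [hsplit, hdg'', hatom _ hg₁cov]
      push_cast
      ring
  constructor
  · -- meet-irreducible → 1-homogeneous
    intro hirr i h1i hik
    have hdegg : deg g = (k : ℤ) := KEY k g hg hk hkmin hirr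
    have hstrict : ∀ i : ℕ, i < k → g ⊔ s ^ (-((i + 1 : ℕ) : ℤ)) ≠ g ⊔ s ^ (-(i : ℤ)) := by
      intro i hik heq
      have h0 : g ⊔ s ^ ((-(i : ℤ)) - 1) = g ⊔ s ^ (-(i : ℤ)) := by
        rw [show (-(i : ℤ)) - 1 = -((i + 1 : ℕ) : ℤ) by push_cast; ring]
        exact heq
      have h2 := aux_stab s hns hs1 g (-(i : ℤ)) h0 (k - i - 1)
      rw [show (-(i : ℤ)) - 1 - ((k - i - 1 : ℕ) : ℤ) = -(k : ℤ) by omega] at h2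
      rw [sup_eq_left.2 hk] at h2
      refine hkmin i hik ?_
      rw [h2]
      exact le_sup_right
    have hDstep : ∀ i : ℕ, i < k →
        deg (g ⊔ s ^ (-(i : ℤ))) + 1 ≤ deg (g ⊔ s ^ (-((i + 1 : ℕ) : ℤ))) := by
      intro i hik
      have hle : g ⊔ s ^ (-((i + 1 : ℕ) : ℤ)) ≤ g ⊔ s ^ (-(i : ℤ)) := by
        refine sup_le_sup_left ?_ g
        have e : s ^ (-((i + 1 : ℕ) : ℤ)) = s⁻¹ * s ^ (-(i : ℤ)) := by
          rw [show -((i + 1 : ℕ) : ℤ) = (-1) + -(i : ℤ) by push_cast; ring,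
            zpow_add, zpow_neg_one]
        rw [e]
        have := mul_le_mul_left hsinv1 (s ^ (-(i : ℤ)))
        simpa using this
      have htri := aux_chain deg hdeg hatom hG (g ⊔ s ^ (-(i : ℤ))) _ hle
      rcases lt_or_eq_of_le htri.1 with h | h
      · omega
      · exact absurd (htri.2.1 h.symm) (hstrict i hik)
    have hDlow : ∀ i : ℕ, i ≤ k → (i : ℤ) ≤ deg (g ⊔ s ^ (-(i : ℤ))) := by
      intro i
      induction i with
      | zero =>
        intro _
        rw [show -((0 : ℕ) : ℤ) = 0 by simp, zpow_zero, sup_eq_right.2 hg,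
          aux_deg_one deg hdeg]
        simp
      | succ m ihm =>
        intro h
        have h1 := hDstep m (by omega)
        have h2 := ihm (by omega)
        have hcast : ((m + 1 : ℕ) : ℤ) = ((m : ℕ) : ℤ) + 1 := by push_cast; ring
        linarith
    have hDaccum : ∀ j i : ℕ, i + j ≤ k →
        deg (g ⊔ s ^ (-(i : ℤ))) + (j : ℤ) ≤ deg (g ⊔ s ^ (-((i + j : ℕ) : ℤ))) := by
      intro j
      induction j with
      | zero => intro i _; simp
      | succ m ihm =>
        intro i h
        have h1 := ihm i (by omega)
        have h2 := hDstep (i + m) (by omega)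
        rw [show ((i + m : ℕ) + 1 : ℕ) = (i + (m + 1) : ℕ) by omega] at h2
        have hcast : ((m + 1 : ℕ) : ℤ) = ((m : ℕ) : ℤ) + 1 := by push_cast; ring
        linarith
    have hDeq : ∀ i : ℕ, i ≤ k → deg (g ⊔ s ^ (-(i : ℤ))) = (i : ℤ) := by
      intro i hi
      have h1 := hDlow i hi
      have h2 := hDaccum (k - i) i (by omega)
      rw [show (i + (k - i) : ℕ) = k by omega] at h2
      have h3 : deg (g ⊔ s ^ (-(k : ℤ))) = (k : ℤ) := by
        rw [sup_eq_left.2 hk]; exact hdegg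
      have h4 : ((k - i : ℕ) : ℤ) = (k : ℤ) - (i : ℤ) := by omega
      linarith
    have e1 : (-(i : ℤ) + 1) = -(((i - 1 : ℕ)) : ℤ) := by omega
    rw [e1, hdeg, aux_deg_inv deg hdeg, hDeq i hik, hDeq (i - 1) (by omega)]
    have : ((i - 1 : ℕ) : ℤ) = (i : ℤ) - 1 := by omega
    linarith
  · -- 1-homogeneous → meet-irreducible
    intro hfac a b ha hb hab
    by_contra hcon
    push_neg at hcon
    obtain ⟨hna, hnb⟩ := hcon
    rcases Nat.eq_zero_or_pos k with hk0 | hkpos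
    · subst hk0
      have h1 : (1 : G) ≤ g := by simpa using hk
      have hg1 : g = 1 := le_antisymm hg h1
      have ha1 : a = 1 := le_antisymm ha (by
        calc (1 : G) = g := hg1.symm
        _ = a ⊓ b := hab
        _ ≤ a := inf_le_left)
      exact hna (hg1.trans ha1.symm)
    -- deg g = k from the factorization
    have hDeq : ∀ i : ℕ, i ≤ k → deg (g ⊔ s ^ (-(i : ℤ))) = (i : ℤ) := by
      intro i
      induction i with
      | zero =>
        intro _
        rw [show -((0 : ℕ) : ℤ) = 0 by simp, zpow_zero, sup_eq_right.2 hg,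
          aux_deg_one deg hdeg]
        simp
      | succ m ihm =>
        intro h
        have h1 := ihm (by omega)
        have h2 := hfac (m + 1) (by omega) h
        have e1 : (-((m + 1 : ℕ) : ℤ) + 1) = -((m : ℕ) : ℤ) := by push_cast; ring
        rw [e1, hdeg, aux_deg_inv deg hdeg, h1] at h2
        have hcast : ((m + 1 : ℕ) : ℤ) = ((m : ℕ) : ℤ) + 1 := by push_cast; ring
        linarith
    have hdegg : deg g = (k : ℤ) := by
      have := hDeq k le_rfl
      rwa [sup_eq_left.2 hk] at this
    -- two distinct covers of g
    have hga : g < a := lt_of_le_of_ne (by rw [hab]; exact inf_le_left) hna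
    have hgb : g < b := lt_of_le_of_ne (by rw [hab]; exact inf_le_right) hnb
    obtain ⟨c₁, hc₁, hc₁a⟩ := aux_exists_covBy_above hG hga.le hga.ne
    obtain ⟨c₂, hc₂, hc₂b⟩ := aux_exists_covBy_above hG hgb.le hgb.ne
    have hcne : c₁ ≠ c₂ := by
      intro h
      have hle : c₁ ≤ g := by rw [hab]; exact le_inf hc₁a (h ▸ hc₂b)
      exact hc₁.1.not_ge hle
    have hinf : c₁ ⊓ c₂ = g := by
      rcases eq_or_lt_of_le (le_inf hc₁.1.le hc₂.1.le : g ≤ c₁ ⊓ c₂) with heq | hlt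
      · exact heq.symm
      · exfalso
        rcases lt_or_eq_of_le (inf_le_left : c₁ ⊓ c₂ ≤ c₁) with hlt2 | heq2
        · exact hc₁.2 hlt hlt2
        · have : c₁ < c₂ := lt_of_le_of_ne (heq2 ▸ inf_le_right) hcne
          exact hc₂.2 hc₁.1 this
    have hcov1 : c₁ ⋖ (c₁ ⊔ c₂) := by
      have h := aux_supcov c₁ hc₂ (by rw [inf_comm]; exact hinf.le)
      rw [sup_eq_right.2 hc₁.1.le, sup_comm] at h
      exact h
    have hcov2 : c₂ ⋖ (c₁ ⊔ c₂) := by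
      have h := aux_supcov c₂ hc₁ hinf.le
      rwa [sup_eq_right.2 hc₂.1.le] at h
    have hv1 : c₁ ⊔ c₂ ≤ 1 := sup_le (hc₁a.trans ha) (hc₂b.trans hb)
    have hd1 : deg g = deg c₁ + 1 := aux_deg_covBy deg hdeg hatom hc₁
    have hd2 : deg c₁ = deg (c₁ ⊔ c₂) + 1 := aux_deg_covBy deg hdeg hatom hcov1
    have hvnonneg : (0 : ℤ) ≤ deg (c₁ ⊔ c₂) := by
      have h := (aux_chain deg hdeg hatom hG 1 (c₁ ⊔ c₂) hv1).1
      rwa [aux_deg_one deg hdeg] at h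
    have hk2 : 2 ≤ k := by
      have : (2 : ℤ) ≤ (k : ℤ) := by linarith
      omega
    have hsvle : s⁻¹ * (c₁ ⊔ c₂) ≤ g := by
      rw [← hinf]
      exact le_inf (aux_cover_s_fact s hglb hcov1) (aux_cover_s_fact s hglb hcov2)
    have hex : ∃ m : ℕ, s ^ (-(m : ℤ)) ≤ c₁ ⊔ c₂ :=
      ⟨k, hk.trans (hc₁.1.le.trans le_sup_left)⟩
    have hm := Nat.find_spec hex
    have hmle : Nat.find hex ≤ k - 2 := by
      apply Nat.find_min' hex
      have h3 := aux_F3 s hglb deg hdeg hatom hG hns (c₁ ⊔ c₂) hv1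
      have hcast : ((k - 2 : ℕ) : ℤ) = (k : ℤ) - 2 := by omega
      have e : -(deg (c₁ ⊔ c₂)) = -(((k - 2 : ℕ)) : ℤ) := by linarith
      rwa [e] at h3
    have hfinal : s ^ (-((Nat.find hex + 1 : ℕ) : ℤ)) ≤ g := by
      have e : s ^ (-((Nat.find hex + 1 : ℕ) : ℤ)) = s⁻¹ * s ^ (-((Nat.find hex : ℕ) : ℤ)) := by
        rw [show -((Nat.find hex + 1 : ℕ) : ℤ) = (-1) + -((Nat.find hex : ℕ) : ℤ) by
          push_cast; ring, zpow_add, zpow_neg_one]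
      rw [e]
      exact le_trans (aux_normal_mono hnsi hm) hsvle
    exact hkmin (Nat.find hex + 1) (by omega) hfinal
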